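/- Let R be a commutative halidon ring with index m and primitive m-th root of unity ω, let G be a cyclic group of order m with generator g, and let u = ∑_{j=0}^{m−1} a_j g^j be an element of the group ring RG with associated elements λ_r = ∑_{j=0}^{m−1} a_j ω^{j·r} for r = 0,…,m−1. Suppose each λ_r is a unit of R, with inverse λ_r^{−1}. Define v = ∑_{i=0}^{m−1} b_i g^i where b_i = m^{−1} · ∑_{r=0}^{m−1} λ_r^{−1} · (ω^{m−1})^{i·r}. Then u·v = 1 in RG; that is, u is a unit of RG and v is its multiplicative inverse. -/

import Mathlib

def IsPrimitiveHalidonRoot {R : Type*} [CommRing R] (m : ℕ) (ω : R) : Prop :=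
  ω ^ m = 1 ∧ (∀ k : ℕ, 0 < k → k < m → ω ^ k ≠ 1) ∧
    ∀ k : ℕ, 0 < k → k < m → ∑ r ∈ Finset.range m, ω ^ (r * k) = 0

private lemma pow_congr_mod {M : Type*} [Monoid M] {x : M} {m : ℕ} (h : x ^ m = 1)
    {s t : ℕ} (hst : s % m = t % m) : x ^ s = x ^ t := by
  have e : ∀ n : ℕ, x ^ n = x ^ (n % m) := fun n => by
    conv_lhs => rw [← Nat.div_add_mod n m, pow_add, pow_mul, h, one_pow, one_mul]
  rw [e s, e t, hst]

private lemma mod_inv_left {m j i : ℕ} (hj : j < m) (hi : i < m) :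
    ((j + i) % m + m - j) % m = i := by
  rcases lt_or_ge (j + i) m with h | h
  · rw [Nat.mod_eq_of_lt h, show j + i + m - j = i + m by omega,
      Nat.add_mod_right, Nat.mod_eq_of_lt hi]
  · have h1 : (j + i) % m = j + i - m := by
      rw [Nat.mod_eq_sub_mod h, Nat.mod_eq_of_lt (by omega)]
    rw [h1, show j + i - m + m - j = i by omega, Nat.mod_eq_of_lt hi]

private lemma mod_inv_right {m j k : ℕ} (hj : j < m) (hk : k < m) :
    (j + (k + m - j) % m) % m = k := by
  rcases lt_or_ge k j with h | h
  · rw [Nat.mod_eq_of_lt (show k + m - j < m by omega),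
      show j + (k + m - j) = k + m by omega, Nat.add_mod_right, Nat.mod_eq_of_lt hk]
  · have h1 : (k + m - j) % m = k - j := by
      rw [Nat.mod_eq_sub_mod (by omega), show k + m - j - m = k - j by omega,
        Nat.mod_eq_of_lt (by omega)]
    rw [h1, show j + (k - j) = k by omega, Nat.mod_eq_of_lt hk]

/-- Let `R` be a commutative halidon ring with index `m`, primitive `m`-th root of unity
`ω` and inverse `minv` of `m·1`.  Let `G = ⟨g⟩` be cyclic of order `m` and let
`u = ∑_j a_j g^j ∈ RG` with associated elements `λ_r = ∑_j a_j ω^{j r}`, each a unit of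
`R` with inverse `lamInv r`.  Then `v = ∑_i b_i g^i` with
`b_i = m⁻¹ ∑_r λ_r⁻¹ (ω^{m-1})^{i r}` satisfies `u * v = 1`, so `u` is a unit of `RG`
with inverse `v`. -/
theorem groupRing_unit_inverse {R G : Type*} [CommRing R] [Group G] [Fintype G]
    (m : ℕ) (hm : 0 < m) (ω : R) (hω : IsPrimitiveHalidonRoot m ω)
    (minv : R) (hminv : (m : R) * minv = 1)
    (g : G) (hg : ∀ x : G, x ∈ Subgroup.zpowers g) (hcard : Fintype.card G = m)
    (a : ℕ → R) (lamInv : ℕ → R)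
    (hlam : ∀ r < m, (∑ j ∈ Finset.range m, a j * ω ^ (j * r)) * lamInv r = 1) :
    (∑ j ∈ Finset.range m, MonoidAlgebra.single (g ^ j) (a j)) *
      (∑ i ∈ Finset.range m, MonoidAlgebra.single (g ^ i)
        (minv * ∑ r ∈ Finset.range m, lamInv r * (ω ^ (m - 1)) ^ (i * r))) =
      (1 : MonoidAlgebra R G) := by
  obtain ⟨hω1, -, hωsum⟩ := hω
  -- the order of `g` is `m`
  have htop : Subgroup.zpowers g = ⊤ := by
    rw [Subgroup.eq_top_iff']; exact hg
  have hord : orderOf g = m := by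
    have h1 := Nat.card_zpowers g
    rw [htop, Nat.card_congr Subgroup.topEquiv.toEquiv, Nat.card_eq_fintype_card, hcard] at h1
    exact h1.symm
  have hg1 : g ^ m = 1 := by rw [← hord]; exact pow_orderOf_eq_one g
  set b : ℕ → R := fun i => minv * ∑ r ∈ Finset.range m, lamInv r * (ω ^ (m - 1)) ^ (i * r)
    with hb
  -- the key coefficient computation
  have key : ∀ k < m,
      (∑ j ∈ Finset.range m, a j * b ((k + m - j) % m)) = if k = 0 then 1 else 0 := by
    intro k hk
    have hexp : ∀ j ∈ Finset.range m, ∀ r : ℕ,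
        (ω ^ (m - 1)) ^ (((k + m - j) % m) * r) = ω ^ (j * r) * ω ^ ((m - 1) * (k * r)) := by
      intro j hj r
      rw [Finset.mem_range] at hj
      rw [← pow_mul, ← pow_add]
      apply pow_congr_mod hω1
      have h : (((m - 1) * (((k + m - j) % m) * r) : ℕ) : ZMod m)
          = ((j * r + (m - 1) * (k * r) : ℕ) : ZMod m) := by
        push_cast [Nat.cast_sub (show 1 ≤ m by omega),
          Nat.cast_sub (show j ≤ k + m by omega), ZMod.natCast_mod, ZMod.natCast_self]
        ring
      exact (ZMod.natCast_eq_natCast_iff _ _ _).mp h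
    have step1 : (∑ j ∈ Finset.range m, a j * b ((k + m - j) % m))
        = minv * ∑ r ∈ Finset.range m, ω ^ ((m - 1) * (k * r)) := by
      rw [hb]
      simp only []
      calc (∑ j ∈ Finset.range m, a j *
              (minv * ∑ r ∈ Finset.range m, lamInv r * (ω ^ (m - 1)) ^ (((k + m - j) % m) * r)))
          = minv * ∑ j ∈ Finset.range m, ∑ r ∈ Finset.range m,
              lamInv r * (a j * ((ω ^ (m - 1)) ^ (((k + m - j) % m) * r))) := by
            rw [Finset.mul_sum]; apply Finset.sum_congr rfl; intro j _
            simp only [Finset.mul_sum]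
            apply Finset.sum_congr rfl; intro r _; ring
        _ = minv * ∑ r ∈ Finset.range m, ∑ j ∈ Finset.range m,
              lamInv r * (a j * ((ω ^ (m - 1)) ^ (((k + m - j) % m) * r))) := by
            rw [Finset.sum_comm]
        _ = minv * ∑ r ∈ Finset.range m, ω ^ ((m - 1) * (k * r)) := by
            congr 1
            apply Finset.sum_congr rfl; intro r hr
            rw [Finset.mem_range] at hr
            calc (∑ j ∈ Finset.range m,
                    lamInv r * (a j * ((ω ^ (m - 1)) ^ (((k + m - j) % m) * r))))
                = ((∑ j ∈ Finset.range m, a j * ω ^ (j * r)) * lamInv r)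
                    * ω ^ ((m - 1) * (k * r)) := by
                  rw [Finset.sum_mul, Finset.sum_mul]
                  apply Finset.sum_congr rfl; intro j hj
                  rw [hexp j hj r]; ring
              _ = ω ^ ((m - 1) * (k * r)) := by rw [hlam r hr, one_mul]
    rw [step1]
    rcases eq_or_ne k 0 with rfl | hk0
    · simp only [if_pos rfl, mul_zero, zero_mul, pow_zero]
      rw [Finset.sum_const, Finset.card_range, nsmul_eq_mul, mul_one, mul_comm]
      exact hminv
    · rw [if_neg hk0]
      have hsum0 : (∑ r ∈ Finset.range m, ω ^ ((m - 1) * (k * r))) = 0 := by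
        have he : ∀ r : ℕ, ω ^ ((m - 1) * (k * r)) = ω ^ (r * (m - k)) := by
          intro r
          apply pow_congr_mod hω1
          have h : (((m - 1) * (k * r) : ℕ) : ZMod m) = ((r * (m - k) : ℕ) : ZMod m) := by
            push_cast [Nat.cast_sub (show 1 ≤ m by omega),
              Nat.cast_sub (show k ≤ m by omega), ZMod.natCast_self]
            ring
          exact (ZMod.natCast_eq_natCast_iff _ _ _).mp h
        rw [Finset.sum_congr rfl fun r _ => he r]
        exact hωsum (m - k) (by omega) (by omega)
      rw [hsum0, mul_zero]
  -- main computation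
  calc (∑ j ∈ Finset.range m, MonoidAlgebra.single (g ^ j) (a j)) *
        (∑ i ∈ Finset.range m, MonoidAlgebra.single (g ^ i) (b i))
      = ∑ j ∈ Finset.range m, ∑ i ∈ Finset.range m,
          MonoidAlgebra.single (g ^ (j + i)) (a j * b i) := by
        rw [Finset.sum_mul_sum]
        exact Finset.sum_congr rfl fun j _ => Finset.sum_congr rfl fun i _ => by
          rw [MonoidAlgebra.single_mul_single, pow_add]
    _ = ∑ j ∈ Finset.range m, ∑ k ∈ Finset.range m,
          MonoidAlgebra.single (g ^ k) (a j * b ((k + m - j) % m)) := by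
        apply Finset.sum_congr rfl; intro j hj
        rw [Finset.mem_range] at hj
        refine Finset.sum_nbij' (fun i => (j + i) % m) (fun k => (k + m - j) % m)
          (fun i hi => ?_) (fun k hk => ?_) (fun i hi => ?_) (fun k hk => ?_) (fun i hi => ?_)
        · exact Finset.mem_range.mpr (Nat.mod_lt _ hm)
        · exact Finset.mem_range.mpr (Nat.mod_lt _ hm)
        · exact mod_inv_left hj (Finset.mem_range.mp hi)
        · exact mod_inv_right hj (Finset.mem_range.mp hk)
        · rw [Finset.mem_range] at hi
          rw [mod_inv_left hj hi]
          congr 1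
          exact pow_congr_mod hg1 (Nat.mod_mod_of_dvd (j + i) dvd_rfl).symm
    _ = ∑ k ∈ Finset.range m, MonoidAlgebra.single (g ^ k)
          (∑ j ∈ Finset.range m, a j * b ((k + m - j) % m)) := by
        rw [Finset.sum_comm]
        apply Finset.sum_congr rfl; intro k _
        exact (map_sum (MonoidAlgebra.singleAddHom (g ^ k)) _ _).symm
    _ = ∑ k ∈ Finset.range m, MonoidAlgebra.single (g ^ k) (if k = 0 then (1 : R) else 0) := by
        apply Finset.sum_congr rfl; intro k hk
        rw [key k (Finset.mem_range.mp hk)]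
    _ = 1 := by
        rw [Finset.sum_eq_single_of_mem 0 (Finset.mem_range.mpr hm)
          (fun k _ hk0 => by rw [if_neg hk0]; exact MonoidAlgebra.single_zero _)]
        simp [MonoidAlgebra.one_def]
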